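/- Let W ∈ ℝ^{F×K} have rank K ≤ F, and let 𝒦 ⊆ [F] be an index set with |𝒦| = K such that the K×K submatrix W_𝒦 (rows of W indexed by 𝒦) is invertible. Let α ∈ ℝ^K be any vector and set M₂ = W Diag(α) Wᵀ. Define R ∈ ℝ^{K×(F−K)} by Rᵀ = W_{𝒦ᶜ} (W_𝒦)^{-1}, where W_{𝒦ᶜ} denotes the rows of W with indices not in 𝒦. Let Π be the permutation matrix corresponding to 𝒦 and X* := Π [[I, R],[0, 0]] Π. Then M₂ = M₂ X*. -/

import Mathlib

open Matrix

/-- M₂ = M₂ X* where X* = Π [[I, R],[0,0]] Π.  The permutation Π that puts the rows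
indexed by 𝒦 first is encoded by an equivalence `e : Fin F ≃ Fin K ⊕ Fin Fc`:
the index set 𝒦 is the preimage of the left summand, `W_𝒦 k j = W (e.symm (inl k)) j`,
and conjugation by Π corresponds to `submatrix e e`. -/
theorem M2_eq_M2_mul_Xstar {F K Fc : ℕ} (W : Matrix (Fin F) (Fin K) ℝ)
    (hrank : W.rank = K)
    (e : Fin F ≃ (Fin K ⊕ Fin Fc))
    (WK : Matrix (Fin K) (Fin K) ℝ) (hWK : WK = fun k j => W (e.symm (Sum.inl k)) j)
    (hWKu : IsUnit WK)
    (Wc : Matrix (Fin Fc) (Fin K) ℝ) (hWc : Wc = fun c j => W (e.symm (Sum.inr c)) j)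
    (R : Matrix (Fin K) (Fin Fc) ℝ) (hR : Rᵀ = Wc * WK⁻¹)
    (α : Fin K → ℝ)
    (M2 : Matrix (Fin F) (Fin F) ℝ) (hM2 : M2 = W * Matrix.diagonal α * Wᵀ)
    (Xstar : Matrix (Fin F) (Fin F) ℝ)
    (hX : Xstar = (Matrix.fromBlocks 1 R 0 0).submatrix e e) :
    M2 = M2 * Xstar := by
  have hdet : IsUnit WK.det := (Matrix.isUnit_iff_isUnit_det WK).mp hWKu
  -- key algebraic fact: WKᵀ * R = Wcᵀ
  have hRT : R = (WK⁻¹)ᵀ * Wcᵀ := by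
    have := congrArg Matrix.transpose hR
    simpa [Matrix.transpose_mul] using this
  have hkey : WKᵀ * R = Wcᵀ := by
    rw [hRT, ← Matrix.mul_assoc, ← Matrix.transpose_mul,
      Matrix.nonsing_inv_mul WK hdet, Matrix.transpose_one, Matrix.one_mul]
  -- Wᵀ as a submatrix of a column-partitioned matrix
  have hcols : Matrix.fromCols WKᵀ Wcᵀ = Wᵀ.submatrix id e.symm := by
    subst hWK hWc
    ext i s
    cases s <;> simp [Matrix.fromCols] <;> rfl
  have hA : Wᵀ = (Matrix.fromCols WKᵀ Wcᵀ).submatrix id e := by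
    rw [hcols, Matrix.submatrix_submatrix]
    simp [Function.comp]
  have key : Wᵀ * Xstar = Wᵀ := by
    rw [hX, hA, Matrix.submatrix_mul_equiv, Matrix.fromCols_mul_fromBlocks]
    simp [hkey]
  rw [hM2, Matrix.mul_assoc (W * Matrix.diagonal α) Wᵀ Xstar, key]
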